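/- Let h > 0 and q_ℓ, q_m, q ∈ ℝ^n, and suppose the midpoint discrete Euler–Lagrange equations hold, i.e. ∂L_d/∂q_m^γ = 0 for every γ. Then the discrete momentum evolution identity holds for every index γ: ∂L_d/∂q^γ + ∂L_d/∂q_ℓ^γ = (h/12) Σ_{α,β} ∂_γ M_{αβ}(q_ℓ) g_ℓ^α g_ℓ^β + (h/3) Σ_{α,β} ∂_γ M_{αβ}(q_m) g_m^α g_m^β + (h/12) Σ_{α,β} ∂_γ M_{αβ}(q) g^α g^β − (h/6) ∂_γ V(q_ℓ) − (2h/3) ∂_γ V(q_m) − (h/6) ∂_γ V(q). (Here ∂L_d/∂q_ℓ^γ and ∂L_d/∂q^γ denote the partial derivatives of L_d with respect to the γ-th coordinates of its first and third arguments.) -/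

import Mathlib

open Matrix

/-- Partial derivative of a scalar function on ℝ^n in the γ-th coordinate direction. -/
noncomputable def pderiv' {n : ℕ} (f : (Fin n → ℝ) → ℝ) (γ : Fin n) (x : Fin n → ℝ) : ℝ :=
  fderiv ℝ f x (Pi.single γ 1)

/-- Gear discrete velocity on the left of the interval. -/
noncomputable def gearLeft {n : ℕ} (h : ℝ) (qℓ qm q : Fin n → ℝ) : Fin n → ℝ :=
  (1 / h) • (-(3 : ℝ) • qℓ + (4 : ℝ) • qm - q)

/-- Gear discrete velocity at the middle of the interval. -/
noncomputable def gearMid {n : ℕ} (h : ℝ) (qℓ qm q : Fin n → ℝ) : Fin n → ℝ :=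
  (1 / h) • (q - qℓ)

/-- Gear discrete velocity on the right of the interval. -/
noncomputable def gearRight {n : ℕ} (h : ℝ) (qℓ qm q : Fin n → ℝ) : Fin n → ℝ :=
  (1 / h) • (qℓ - (4 : ℝ) • qm + (3 : ℝ) • q)

/-- The Simpson discrete Lagrangian. -/
noncomputable def simpsonDiscreteLagrangian {n : ℕ}
    (M : (Fin n → ℝ) → Matrix (Fin n) (Fin n) ℝ) (V : (Fin n → ℝ) → ℝ)
    (h : ℝ) (qℓ qm q : Fin n → ℝ) : ℝ :=
  (h / 2) * ((1 / 6) * (gearLeft h qℓ qm q ⬝ᵥ (M qℓ).mulVec (gearLeft h qℓ qm q))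
      + (2 / 3) * (gearMid h qℓ qm q ⬝ᵥ (M qm).mulVec (gearMid h qℓ qm q))
      + (1 / 6) * (gearRight h qℓ qm q ⬝ᵥ (M q).mulVec (gearRight h qℓ qm q)))
    - h * ((1 / 6) * V qℓ + (2 / 3) * V qm + (1 / 6) * V q)

private lemma dot_mulVec_sum {n : ℕ} (A : Matrix (Fin n) (Fin n) ℝ) (u : Fin n → ℝ) :
    u ⬝ᵥ A.mulVec u = ∑ α, ∑ β, A α β * u α * u β := by
  simp only [dotProduct, Matrix.mulVec, Finset.mul_sum]
  exact Finset.sum_congr rfl fun α _ => Finset.sum_congr rfl fun β _ => by ring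

private lemma gearLeft_apply {n : ℕ} (h : ℝ) (a b c : Fin n → ℝ) (α : Fin n) :
    gearLeft h a b c α = (1 / h) * (-(3 : ℝ) * a α + 4 * b α - c α) := by
  simp [gearLeft, smul_eq_mul]

private lemma gearMid_apply {n : ℕ} (h : ℝ) (a b c : Fin n → ℝ) (α : Fin n) :
    gearMid h a b c α = (1 / h) * (c α - a α) := by
  simp [gearMid, smul_eq_mul]

private lemma gearRight_apply {n : ℕ} (h : ℝ) (a b c : Fin n → ℝ) (α : Fin n) :
    gearRight h a b c α = (1 / h) * (a α - 4 * b α + 3 * c α) := by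
  simp [gearRight, smul_eq_mul]

private lemma gearLeft_shift {n : ℕ} (h : ℝ) (a b c y : Fin n → ℝ) :
    gearLeft h (a + y) (b + y) (c + y) = gearLeft h a b c := by
  unfold gearLeft; module

private lemma gearMid_shift {n : ℕ} (h : ℝ) (a b c y : Fin n → ℝ) :
    gearMid h (a + y) (b + y) (c + y) = gearMid h a b c := by
  unfold gearMid; module

private lemma gearRight_shift {n : ℕ} (h : ℝ) (a b c y : Fin n → ℝ) :
    gearRight h (a + y) (b + y) (c + y) = gearRight h a b c := by
  unfold gearRight; module

/-- translation derivative -/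
private lemma hasFDerivAt_translate {n : ℕ} (f : (Fin n → ℝ) → ℝ) (a : Fin n → ℝ)
    (hf : Differentiable ℝ f) :
    HasFDerivAt (fun y => f (a + y)) (fderiv ℝ f a) 0 := by
  have h1 : HasFDerivAt (fun y : Fin n → ℝ => a + y) (ContinuousLinearMap.id ℝ _) 0 :=
    (hasFDerivAt_id (0 : Fin n → ℝ)).const_add a
  have := HasFDerivAt.comp (0 : Fin n → ℝ) ((hf (a + 0)).hasFDerivAt) h1
  simp only [add_zero, ContinuousLinearMap.comp_id] at this
  exact this

theorem simpson_discrete_momentum_evolution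
    (n : ℕ) (M : (Fin n → ℝ) → Matrix (Fin n) (Fin n) ℝ) (V : (Fin n → ℝ) → ℝ)
    (hM : ∀ α β, ContDiff ℝ 1 (fun x => M x α β))
    (hMsymm : ∀ x, (M x).IsSymm)
    (hV : ContDiff ℝ 1 V)
    (h : ℝ) (hh : 0 < h) (qℓ qm q : Fin n → ℝ)
    (hmid : ∀ γ : Fin n,
      fderiv ℝ (fun y => simpsonDiscreteLagrangian M V h qℓ y q) qm (Pi.single γ 1) = 0) :
    ∀ γ : Fin n,
      fderiv ℝ (fun y => simpsonDiscreteLagrangian M V h qℓ qm y) q (Pi.single γ 1)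
        + fderiv ℝ (fun y => simpsonDiscreteLagrangian M V h y qm q) qℓ (Pi.single γ 1)
      = (h / 12) * (∑ α, ∑ β, pderiv' (fun x => M x α β) γ qℓ
            * gearLeft h qℓ qm q α * gearLeft h qℓ qm q β)
        + (h / 3) * (∑ α, ∑ β, pderiv' (fun x => M x α β) γ qm
            * gearMid h qℓ qm q α * gearMid h qℓ qm q β)
        + (h / 12) * (∑ α, ∑ β, pderiv' (fun x => M x α β) γ q
            * gearRight h qℓ qm q α * gearRight h qℓ qm q β)
        - (h / 6) * pderiv' V γ qℓ
        - (2 * h / 3) * pderiv' V γ qm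
        - (h / 6) * pderiv' V γ q := by
  intro γ
  have hMd : ∀ α β, Differentiable ℝ (fun x => M x α β) := fun α β => (hM α β).differentiable one_ne_zero
  have hVd : Differentiable ℝ V := hV.differentiable one_ne_zero
  set e : Fin n → ℝ := Pi.single γ 1 with he
  set L : (Fin n → ℝ) × (Fin n → ℝ) × (Fin n → ℝ) → ℝ :=
    fun p => simpsonDiscreteLagrangian M V h p.1 p.2.1 p.2.2 with hLdef
  -- differentiability of L
  have hLeq : L = fun p : (Fin n → ℝ) × (Fin n → ℝ) × (Fin n → ℝ) =>
      (h / 2) * ((1 / 6) * ∑ α, ∑ β, M p.1 α β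
            * ((1/h) * (-(3:ℝ) * p.1 α + 4 * p.2.1 α - p.2.2 α))
            * ((1/h) * (-(3:ℝ) * p.1 β + 4 * p.2.1 β - p.2.2 β))
        + (2 / 3) * ∑ α, ∑ β, M p.2.1 α β
            * ((1/h) * (p.2.2 α - p.1 α)) * ((1/h) * (p.2.2 β - p.1 β))
        + (1 / 6) * ∑ α, ∑ β, M p.2.2 α β
            * ((1/h) * (p.1 α - 4 * p.2.1 α + 3 * p.2.2 α))
            * ((1/h) * (p.1 β - 4 * p.2.1 β + 3 * p.2.2 β)))
      - h * ((1 / 6) * V p.1 + (2 / 3) * V p.2.1 + (1 / 6) * V p.2.2) := by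
    funext p
    simp only [hLdef, simpsonDiscreteLagrangian, dot_mulVec_sum, gearLeft_apply, gearMid_apply,
      gearRight_apply]
  have hL : Differentiable ℝ L := by rw [hLeq]; fun_prop
  set D := fderiv ℝ L (qℓ, qm, q) with hD
  -- partial derivatives
  have hι1 : HasFDerivAt (fun y : Fin n → ℝ => ((y, qm, q) : (Fin n → ℝ) × (Fin n → ℝ) × (Fin n → ℝ)))
      ((ContinuousLinearMap.id ℝ (Fin n → ℝ)).prod
        ((0 : (Fin n → ℝ) →L[ℝ] (Fin n → ℝ)).prod (0 : (Fin n → ℝ) →L[ℝ] (Fin n → ℝ)))) qℓ :=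
    HasFDerivAt.prodMk (hasFDerivAt_id qℓ) (HasFDerivAt.prodMk (hasFDerivAt_const qm qℓ) (hasFDerivAt_const q qℓ))
  have H1 : fderiv ℝ (fun y => simpsonDiscreteLagrangian M V h y qm q) qℓ e = D (e, 0, 0) := by
    have := (HasFDerivAt.comp qℓ (hL (qℓ, qm, q)).hasFDerivAt hι1).fderiv
    rw [show (fun y : Fin n → ℝ => simpsonDiscreteLagrangian M V h y qm q)
      = L ∘ (fun y => (y, qm, q)) from rfl, this]
    simp
    rfl
  have hι2 : HasFDerivAt (fun y : Fin n → ℝ => ((qℓ, y, q) : (Fin n → ℝ) × (Fin n → ℝ) × (Fin n → ℝ)))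
      ((0 : (Fin n → ℝ) →L[ℝ] (Fin n → ℝ)).prod
        ((ContinuousLinearMap.id ℝ (Fin n → ℝ)).prod (0 : (Fin n → ℝ) →L[ℝ] (Fin n → ℝ)))) qm :=
    HasFDerivAt.prodMk (hasFDerivAt_const qℓ qm) (HasFDerivAt.prodMk (hasFDerivAt_id qm) (hasFDerivAt_const q qm))
  have H2 : fderiv ℝ (fun y => simpsonDiscreteLagrangian M V h qℓ y q) qm e = D (0, e, 0) := by
    have := (HasFDerivAt.comp qm (hL (qℓ, qm, q)).hasFDerivAt hι2).fderiv
    rw [show (fun y : Fin n → ℝ => simpsonDiscreteLagrangian M V h qℓ y q)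
      = L ∘ (fun y => (qℓ, y, q)) from rfl, this]
    simp
    rfl
  have hι3 : HasFDerivAt (fun y : Fin n → ℝ => ((qℓ, qm, y) : (Fin n → ℝ) × (Fin n → ℝ) × (Fin n → ℝ)))
      ((0 : (Fin n → ℝ) →L[ℝ] (Fin n → ℝ)).prod
        ((0 : (Fin n → ℝ) →L[ℝ] (Fin n → ℝ)).prod (ContinuousLinearMap.id ℝ (Fin n → ℝ)))) q :=
    HasFDerivAt.prodMk (hasFDerivAt_const qℓ q) (HasFDerivAt.prodMk (hasFDerivAt_const qm q) (hasFDerivAt_id q))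
  have H3 : fderiv ℝ (fun y => simpsonDiscreteLagrangian M V h qℓ qm y) q e = D (0, 0, e) := by
    have := (HasFDerivAt.comp q (hL (qℓ, qm, q)).hasFDerivAt hι3).fderiv
    rw [show (fun y : Fin n → ℝ => simpsonDiscreteLagrangian M V h qℓ qm y)
      = L ∘ (fun y => (qℓ, qm, y)) from rfl, this]
    simp
    rfl
  -- the diagonal translation
  have hιd : HasFDerivAt
      (fun y : Fin n → ℝ => ((qℓ + y, qm + y, q + y) : (Fin n → ℝ) × (Fin n → ℝ) × (Fin n → ℝ)))
      ((ContinuousLinearMap.id ℝ (Fin n → ℝ)).prod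
        ((ContinuousLinearMap.id ℝ (Fin n → ℝ)).prod (ContinuousLinearMap.id ℝ (Fin n → ℝ)))) 0 :=
    HasFDerivAt.prodMk ((hasFDerivAt_id (0 : Fin n → ℝ)).const_add qℓ)
      (HasFDerivAt.prodMk ((hasFDerivAt_id (0 : Fin n → ℝ)).const_add qm)
        ((hasFDerivAt_id (0 : Fin n → ℝ)).const_add q))
  have HΦ : HasFDerivAt
      (fun y : Fin n → ℝ => simpsonDiscreteLagrangian M V h (qℓ + y) (qm + y) (q + y))
      (D.comp ((ContinuousLinearMap.id ℝ (Fin n → ℝ)).prod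
        ((ContinuousLinearMap.id ℝ (Fin n → ℝ)).prod (ContinuousLinearMap.id ℝ (Fin n → ℝ))))) 0 := by
    have := HasFDerivAt.comp (0 : Fin n → ℝ)
      (hL ((qℓ + 0, qm + 0, q + 0) :
        (Fin n → ℝ) × (Fin n → ℝ) × (Fin n → ℝ))).hasFDerivAt hιd
    simp only [add_zero] at this
    exact this
  have hΦΨ : (fun y : Fin n → ℝ => simpsonDiscreteLagrangian M V h (qℓ + y) (qm + y) (q + y))
      = fun y : Fin n → ℝ =>
      (h / 2) * ((1 / 6) * ∑ α, ∑ β, M (qℓ + y) α β * gearLeft h qℓ qm q α * gearLeft h qℓ qm q β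
        + (2 / 3) * ∑ α, ∑ β, M (qm + y) α β * gearMid h qℓ qm q α * gearMid h qℓ qm q β
        + (1 / 6) * ∑ α, ∑ β, M (q + y) α β * gearRight h qℓ qm q α * gearRight h qℓ qm q β)
      - h * ((1 / 6) * V (qℓ + y) + (2 / 3) * V (qm + y) + (1 / 6) * V (q + y)) := by
    funext y
    simp only [simpsonDiscreteLagrangian, gearLeft_shift, gearMid_shift, gearRight_shift,
      dot_mulVec_sum]
  have hS1 : HasFDerivAt (fun y : Fin n → ℝ =>
      ∑ α, ∑ β, M (qℓ + y) α β * gearLeft h qℓ qm q α * gearLeft h qℓ qm q β)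
      (∑ α, ∑ β, gearLeft h qℓ qm q β •
        (gearLeft h qℓ qm q α • fderiv ℝ (fun x => M x α β) qℓ)) 0 :=
    HasFDerivAt.fun_sum fun α _ => HasFDerivAt.fun_sum fun β _ =>
      ((hasFDerivAt_translate _ qℓ (hMd α β)).mul_const _).mul_const _
  have hS2 : HasFDerivAt (fun y : Fin n → ℝ =>
      ∑ α, ∑ β, M (qm + y) α β * gearMid h qℓ qm q α * gearMid h qℓ qm q β)
      (∑ α, ∑ β, gearMid h qℓ qm q β •
        (gearMid h qℓ qm q α • fderiv ℝ (fun x => M x α β) qm)) 0 :=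
    HasFDerivAt.fun_sum fun α _ => HasFDerivAt.fun_sum fun β _ =>
      ((hasFDerivAt_translate _ qm (hMd α β)).mul_const _).mul_const _
  have hS3 : HasFDerivAt (fun y : Fin n → ℝ =>
      ∑ α, ∑ β, M (q + y) α β * gearRight h qℓ qm q α * gearRight h qℓ qm q β)
      (∑ α, ∑ β, gearRight h qℓ qm q β •
        (gearRight h qℓ qm q α • fderiv ℝ (fun x => M x α β) q)) 0 :=
    HasFDerivAt.fun_sum fun α _ => HasFDerivAt.fun_sum fun β _ =>
      ((hasFDerivAt_translate _ q (hMd α β)).mul_const _).mul_const _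
  have hΨ : HasFDerivAt (fun y : Fin n → ℝ =>
      (h / 2) * ((1 / 6) * ∑ α, ∑ β, M (qℓ + y) α β * gearLeft h qℓ qm q α * gearLeft h qℓ qm q β
        + (2 / 3) * ∑ α, ∑ β, M (qm + y) α β * gearMid h qℓ qm q α * gearMid h qℓ qm q β
        + (1 / 6) * ∑ α, ∑ β, M (q + y) α β * gearRight h qℓ qm q α * gearRight h qℓ qm q β)
      - h * ((1 / 6) * V (qℓ + y) + (2 / 3) * V (qm + y) + (1 / 6) * V (q + y)))
      ((h / 2) • ((1 / 6 : ℝ) • (∑ α, ∑ β, gearLeft h qℓ qm q β •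
            (gearLeft h qℓ qm q α • fderiv ℝ (fun x => M x α β) qℓ))
        + (2 / 3 : ℝ) • (∑ α, ∑ β, gearMid h qℓ qm q β •
            (gearMid h qℓ qm q α • fderiv ℝ (fun x => M x α β) qm))
        + (1 / 6 : ℝ) • (∑ α, ∑ β, gearRight h qℓ qm q β •
            (gearRight h qℓ qm q α • fderiv ℝ (fun x => M x α β) q)))
      - h • ((1 / 6 : ℝ) • fderiv ℝ V qℓ + (2 / 3 : ℝ) • fderiv ℝ V qm
        + (1 / 6 : ℝ) • fderiv ℝ V q)) 0 := by
    exact (((((hS1.const_mul (1/6)).add (hS2.const_mul (2/3))).add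
        (hS3.const_mul (1/6))).const_mul (h/2)).sub
      (((((hasFDerivAt_translate _ qℓ hVd).const_mul (1/6)).add
        ((hasFDerivAt_translate _ qm hVd).const_mul (2/3))).add
        ((hasFDerivAt_translate _ q hVd).const_mul (1/6))).const_mul h))
  rw [hΦΨ] at HΦ
  have huniq := HΦ.unique hΨ
  have hsplit : ((e, e, e) : (Fin n → ℝ) × (Fin n → ℝ) × (Fin n → ℝ))
      = (e, 0, 0) + (0, e, 0) + (0, 0, e) := by
    simp [Prod.ext_iff]
  have key : D (e, 0, 0) + D (0, e, 0) + D (0, 0, e)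
      = (h / 2) * ((1 / 6) * ∑ α, ∑ β, gearLeft h qℓ qm q β *
            (gearLeft h qℓ qm q α * fderiv ℝ (fun x => M x α β) qℓ e)
        + (2 / 3) * ∑ α, ∑ β, gearMid h qℓ qm q β *
            (gearMid h qℓ qm q α * fderiv ℝ (fun x => M x α β) qm e)
        + (1 / 6) * ∑ α, ∑ β, gearRight h qℓ qm q β *
            (gearRight h qℓ qm q α * fderiv ℝ (fun x => M x α β) q e))
      - h * ((1 / 6) * fderiv ℝ V qℓ e + (2 / 3) * fderiv ℝ V qm e
        + (1 / 6) * fderiv ℝ V q e) := by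
    have h1 : D (e, e, e) = D (e, 0, 0) + D (0, e, 0) + D (0, 0, e) := by
      rw [hsplit, map_add, map_add]
    have h2 : D (e, e, e) = D.comp ((ContinuousLinearMap.id ℝ (Fin n → ℝ)).prod
        ((ContinuousLinearMap.id ℝ (Fin n → ℝ)).prod (ContinuousLinearMap.id ℝ (Fin n → ℝ)))) e := by
      simp
    rw [← h1, h2, huniq]
    simp only [ContinuousLinearMap.coe_sub', Pi.sub_apply, ContinuousLinearMap.coe_smul',
      Pi.smul_apply, ContinuousLinearMap.add_apply, ContinuousLinearMap.coe_sum',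
      Finset.sum_apply, smul_eq_mul]
  have hmide : D (0, e, 0) = 0 := by rw [← H2]; exact hmid γ
  rw [H1, H3]
  have hflip : D (0, 0, e) + D (e, 0, 0) = D (e, 0, 0) + D (0, e, 0) + D (0, 0, e) := by
    rw [hmide]; ring
  rw [hflip, key]
  simp only [pderiv', ← he]
  have e1 : ∀ (x : Fin n → ℝ) (g : Fin n → ℝ),
      (∑ α, ∑ β, g β * (g α * fderiv ℝ (fun x => M x α β) x e))
      = ∑ α, ∑ β, fderiv ℝ (fun x => M x α β) x e * g α * g β := fun x g =>
    Finset.sum_congr rfl fun α _ => Finset.sum_congr rfl fun β _ => by ring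
  rw [e1, e1, e1]
  ring
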